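/- In a rooted phylogenetic network N on a finite set X, for every nonempty subset Y of X, the set of stable ancestors of Y is nonempty and contains a unique element lsa(Y) that is below every stable ancestor of Y (the lowest stable ancestor of Y). -/

import Mathlib

open Relation

/-- A rooted phylogenetic network on a finite taxa set `X` with vertex type `V`:
a finite simple acyclic digraph with a unique root (indegree 0, reaching every
vertex), no vertices with indegree 1 and outdegree 1, whose leaves (outdegree-0
vertices) are bijectively labelled by `X`. -/
structure PhyloNetwork (V X : Type) [Fintype V] [Fintype X] where
  /-- arc relation of the digraph -/
  Adj : V → V → Prop
  /-- acyclicity: no directed cycle -/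
  acyclic : ∀ v, ¬ Relation.TransGen Adj v v
  /-- the root -/
  root : V
  /-- the root has indegree 0 -/
  root_no_parent : ∀ u, ¬ Adj u root
  /-- every vertex is reachable from the root by a directed path -/
  root_reaches : ∀ v, Relation.ReflTransGen Adj root v
  /-- no vertex has indegree 1 and outdegree 1 -/
  no_degenerate : ∀ v, ¬ ({u | Adj u v}.ncard = 1 ∧ {u | Adj v u}.ncard = 1)
  /-- the leaves are bijectively labelled by the taxa in `X` -/
  label : X ≃ {v : V // ∀ u, ¬ Adj v u}

namespace PhyloNetwork

variable {V X : Type} [Fintype V] [Fintype X] (N : PhyloNetwork V X)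

/-- a leaf is a vertex of outdegree 0 -/
def IsLeaf (v : V) : Prop := ∀ u, ¬ N.Adj v u

/-- the leaf labelled by taxon `x` -/
def leaf (x : X) : V := (N.label x).val

/-- `u` is below `v` (equivalently, `v` is above `u`): there is a directed
path from `v` to `u` -/
def below (u v : V) : Prop := Relation.ReflTransGen N.Adj v u

/-- `u` is strictly below `v` -/
def strictlyBelow (u v : V) : Prop := N.below u v ∧ u ≠ v

/-- the cluster of a vertex: the set of taxa labelling the leaves below it -/
def cluster (v : V) : Set X := {x | N.below (N.leaf x) v}

/-- a common ancestor of a set `Y` of taxa -/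
def CommonAncestor (Y : Set X) (v : V) : Prop := Y ⊆ N.cluster v

/-- a lowest common ancestor (LCA) of `Y`: a common ancestor of `Y` such that
no other common ancestor of `Y` is strictly below it -/
def IsLCA (Y : Set X) (v : V) : Prop :=
  N.CommonAncestor Y v ∧ ∀ u, N.CommonAncestor Y u → ¬ N.strictlyBelow u v

/-- `p` is a directed path from `u` to `v`, recorded as its list of vertices -/
def IsDipath (p : List V) (u v : V) : Prop :=
  p ≠ [] ∧ p.head? = some u ∧ p.getLast? = some v ∧ p.Chain' N.Adj ∧ p.Nodup

/-- the arc `(a, b)` is traversed by the path `p` -/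
def ArcIn (p : List V) (a b : V) : Prop := (a, b) ∈ p.zip p.tail

/-- a stable ancestor of `Y`: a vertex contained in every directed path from
the root to some taxon in `Y` -/
def StableAncestor (Y : Set X) (v : V) : Prop :=
  ∀ x ∈ Y, ∀ p : List V, N.IsDipath p N.root (N.leaf x) → v ∈ p

/-- the lowest stable ancestor (LSA) of `Y`: the stable ancestor of `Y`
that is below every stable ancestor of `Y` -/
def IsLSA (Y : Set X) (w : V) : Prop :=
  N.StableAncestor Y w ∧ ∀ v, N.StableAncestor Y v → N.below w v

/-- the underlying undirected graph of the network -/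
def underlying : SimpleGraph V := SimpleGraph.fromRel N.Adj

/-- indegree of a vertex -/
noncomputable def inDeg (v : V) : ℕ := {u | N.Adj u v}.ncard

/-- outdegree of a vertex -/
noncomputable def outDeg (v : V) : ℕ := {u | N.Adj v u}.ncard

/-- binary network: every non-leaf vertex has indegree at most 2 and
outdegree at most 2, and every vertex of indegree 2 has outdegree 1 -/
def Binary : Prop :=
  (∀ v, ¬ N.IsLeaf v → N.inDeg v ≤ 2 ∧ N.outDeg v ≤ 2) ∧
  (∀ v, N.inDeg v = 2 → N.outDeg v = 1)

/-- level-1 network: binary, and any two cycles of the underlying undirected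
graph are vertex-disjoint (i.e. any two cycles sharing a vertex have the same
vertex set) -/
def Level1 : Prop :=
  N.Binary ∧ ∀ (u v : V) (c₁ : N.underlying.Walk u u) (c₂ : N.underlying.Walk v v),
    c₁.IsCycle → c₂.IsCycle → ∀ w, w ∈ c₁.support → w ∈ c₂.support →
      ∀ z, (z ∈ c₁.support ↔ z ∈ c₂.support)

/-- a cut arc: an arc whose removal disconnects the underlying undirected graph -/
def CutArc (a b : V) : Prop :=
  N.Adj a b ∧ ¬ (SimpleGraph.fromRel (fun u v => N.Adj u v ∧ ¬ (u = a ∧ v = b))).Connected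

/-- a splitting ancestor of distinct taxa `x` and `y`: a (non-leaf) vertex such
that precisely one taxon from `{x, y}` is below both of its children, while the
other taxon is below exactly one of its two children -/
def SplittingAncestor (x y : X) (v : V) : Prop :=
  ∃ c₁ c₂, c₁ ≠ c₂ ∧ N.Adj v c₁ ∧ N.Adj v c₂ ∧
    ((N.below (N.leaf x) c₁ ∧ N.below (N.leaf x) c₂ ∧
        Xor' (N.below (N.leaf y) c₁) (N.below (N.leaf y) c₂)) ∨
     (N.below (N.leaf y) c₁ ∧ N.below (N.leaf y) c₂ ∧
        Xor' (N.below (N.leaf x) c₁) (N.below (N.leaf x) c₂)))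

/-- saturated level-1 network: each non-leaf vertex is contained in a cycle of
size three of the underlying undirected graph -/
def Saturated : Prop :=
  ∀ v, ¬ N.IsLeaf v → ∃ c : N.underlying.Walk v v, c.IsCycle ∧ c.length = 3

/-- the multiset of clusters induced by the vertices of the network -/
noncomputable def clusterMultiset : Multiset (Set X) :=
  (Finset.univ : Finset V).val.map N.cluster

/-- the Robinson–Foulds distance: the size of the symmetric difference of the
multisets of clusters of the two networks -/
noncomputable def rfDist {V V' X : Type} [Fintype V] [Fintype V'] [Fintype X]
    (N : PhyloNetwork V X) (N' : PhyloNetwork V' X) : ℕ :=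
  letI : DecidableEq (Set X) := Classical.decEq _
  ((N.clusterMultiset - N'.clusterMultiset) +
    (N'.clusterMultiset - N.clusterMultiset)).card

end PhyloNetwork

private lemma rtg_eq_or_tg {α : Type*} {r : α → α → Prop} {a b : α}
    (h : Relation.ReflTransGen r a b) : a = b ∨ Relation.TransGen r a b := by
  induction h with
  | refl => exact Or.inl rfl
  | tail _ h₂ ih =>
    rcases ih with rfl | ih
    · exact Or.inr (Relation.TransGen.single h₂)
    · exact Or.inr (ih.tail h₂)

namespace PhyloNetwork

variable {V X : Type} [Fintype V] [Fintype X] (N : PhyloNetwork V X)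

lemma below_antisymm' {a b : V} (h₁ : N.below a b) (h₂ : N.below b a) : a = b := by
  rcases rtg_eq_or_tg h₁ with h | t₁
  · exact h.symm
  · rcases rtg_eq_or_tg h₂ with h | t₂
    · exact h
    · exact absurd (t₁.trans t₂) (N.acyclic b)

lemma chain'_pairwise {p : List V} (hc : p.Chain' N.Adj) :
    p.Pairwise (Relation.TransGen N.Adj) := by
  have : p.Chain' (Relation.TransGen N.Adj) := hc.imp fun _ _ h => Relation.TransGen.single h
  exact List.isChain_iff_pairwise.mp this

lemma exists_dipath (v : V) : ∃ p, N.IsDipath p N.root v := by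
  obtain ⟨l, hchain, hlast⟩ := List.exists_isChain_cons_of_relationReflTransGen (N.root_reaches v)
  have hc : (N.root :: l).Chain' N.Adj := hchain
  refine ⟨N.root :: l, List.cons_ne_nil _ _, rfl, ?_, hc, ?_⟩
  · rw [List.getLast?_eq_getLast (List.cons_ne_nil _ _)]
    exact congrArg some hlast
  · exact (N.chain'_pairwise hc).imp fun h heq => absurd (heq ▸ h) (N.acyclic _)

end PhyloNetwork

/-- In a rooted phylogenetic network `N` on a finite set `X`, for
every nonempty subset `Y` of `X`, the set of stable ancestors of `Y` is
nonempty and contains a unique element `lsa(Y)` that is below every stable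
ancestor of `Y`. -/
theorem lsa_exists_unique {V X : Type} [Fintype V] [Fintype X]
    (N : PhyloNetwork V X) (Y : Set X) (hY : Y.Nonempty) :
    {v | N.StableAncestor Y v}.Nonempty ∧ ∃! w, N.IsLSA Y w := by
  classical
  obtain ⟨x, hx⟩ := hY
  obtain ⟨p, hp⟩ := N.exists_dipath (N.leaf x)
  have hroot : N.StableAncestor Y N.root := by
    intro y _ q hq
    rcases q with _ | ⟨a, q⟩
    · exact absurd rfl hq.1
    · have : a = N.root := by simpa using hq.2.1
      simp [this]
  have hmem : ∀ v, N.StableAncestor Y v → v ∈ p := fun v hv => hv x hx p hp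
  set F : Finset (Fin p.length) :=
    Finset.univ.filter (fun i => N.StableAncestor Y (p.get i)) with hF
  have hFne : F.Nonempty := by
    obtain ⟨i, hi⟩ := List.mem_iff_get.mp (hmem _ hroot)
    refine ⟨i, ?_⟩
    simp only [hF, Finset.mem_filter, Finset.mem_univ, true_and]
    rw [hi]; exact hroot
  set m := F.max' hFne with hm
  set w := p.get m with hw
  have hwS : N.StableAncestor Y w := by
    exact (Finset.mem_filter.mp (F.max'_mem hFne)).2
  have hpw : p.Pairwise (Relation.TransGen N.Adj) := N.chain'_pairwise hp.2.2.2.1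
  have hbelow : ∀ v, N.StableAncestor Y v → N.below w v := by
    intro v hv
    obtain ⟨i, hi⟩ := List.mem_iff_get.mp (hmem v hv)
    have him : i ∈ F := by
      simp only [hF, Finset.mem_filter, Finset.mem_univ, true_and]
      rw [hi]; exact hv
    have hle : i ≤ m := F.le_max' i him
    rcases lt_or_eq_of_le hle with hlt | heq
    · have := List.pairwise_iff_get.mp hpw i m hlt
      rw [← hi]
      exact this.to_reflTransGen
    · rw [← hi, heq]
      exact Relation.ReflTransGen.refl
  refine ⟨⟨N.root, hroot⟩, ⟨w, ⟨hwS, hbelow⟩, ?_⟩⟩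
  rintro w' ⟨hw'S, hb'⟩
  exact N.below_antisymm' (hb' w hwS) (hbelow w' hw'S)
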